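/- arXiv:2305.00633 — 2 statements merged into one kernel-verified Lean document; each statement's English description precedes it below -/
import Mathlib

section
/- Let S* be a finite nonempty set, let τ > 0, and let E : S* → ℝ be a nonnegative score function. Set f(s) = exp(E(s)/τ). Let S ⊆ S* be a nonempty subset with |S| = M, and suppose c̄ and c are constants with c̄ ≥ f(s) ≥ c for all s ∈ S* and c ≥ 1; set r = c̄/c. Define P*(s) = f(s) / ∑_{s' ∈ S*} f(s') and P(s) = f(s) / ∑_{s' ∈ S} f(s'). Then for every s ∈ S, |P*(s) − P(s)| ≤ r² · (1 − M/|S*|) / M. -/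
/-- Proposition (Appendix A of the paper): the softmax distribution at temperature `τ`
over a nonempty finite set `Sstar`, restricted/renormalized to a nonempty subset `S`
of cardinality `M`, differs pointwise from the full softmax by at most
`r² · (1 − M/|Sstar|) / M`, where `r = c̄/c` with `c̄ ≥ exp(E s / τ) ≥ c ≥ 1`. -/
theorem softmax_subset_approx {α : Type*} (Sstar S : Finset α)
    (hSstar : Sstar.Nonempty) (hS : S.Nonempty) (hsub : S ⊆ Sstar)
    (τ : ℝ) (hτ : 0 < τ)
    (E : α → ℝ) (hE : ∀ s ∈ Sstar, 0 ≤ E s)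
    (M : ℕ) (hM : S.card = M)
    (cbar clow : ℝ) (hclow : 1 ≤ clow)
    (hub : ∀ s ∈ Sstar, Real.exp (E s / τ) ≤ cbar)
    (hlb : ∀ s ∈ Sstar, clow ≤ Real.exp (E s / τ))
    (r : ℝ) (hr : r = cbar / clow) :
    ∀ s ∈ S,
      |Real.exp (E s / τ) / (∑ s' ∈ Sstar, Real.exp (E s' / τ)) -
        Real.exp (E s / τ) / (∑ s' ∈ S, Real.exp (E s' / τ))| ≤
      r ^ 2 * ((1 - (M : ℝ) / (Sstar.card : ℝ)) / (M : ℝ)) := by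
  classical
  intro s hs
  set f : α → ℝ := fun t => Real.exp (E t / τ) with hf
  have hfpos : ∀ t, 0 < f t := fun t => Real.exp_pos _
  have hc0 : (0:ℝ) < clow := lt_of_lt_of_le one_pos hclow
  have hcbar : clow ≤ cbar := le_trans (hlb s (hsub hs)) (hub s (hsub hs))
  have hcbar0 : (0:ℝ) < cbar := lt_of_lt_of_le hc0 hcbar
  have hNpos : 0 < Sstar.card := Finset.card_pos.mpr hSstar
  have hMpos : 0 < M := hM ▸ Finset.card_pos.mpr hS
  have hMN : M ≤ Sstar.card := hM ▸ Finset.card_le_card hsub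
  set A := ∑ s' ∈ Sstar, f s' with hA
  set B := ∑ s' ∈ S, f s' with hB
  have hBpos : 0 < B := Finset.sum_pos (fun t _ => hfpos t) hS
  have hApos : 0 < A := Finset.sum_pos (fun t _ => hfpos t) hSstar
  have hBA : B ≤ A :=
    Finset.sum_le_sum_of_subset_of_nonneg hsub (fun t _ _ => (hfpos t).le)
  have hdiff : A - B = ∑ s' ∈ Sstar \ S, f s' := by
    rw [hA, hB, ← Finset.sum_sdiff hsub]; ring
  have hABle : A - B ≤ cbar * ((Sstar.card : ℝ) - M) := by
    rw [hdiff]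
    calc ∑ s' ∈ Sstar \ S, f s' ≤ ∑ _s' ∈ Sstar \ S, cbar :=
          Finset.sum_le_sum (fun t ht => hub t (Finset.mem_sdiff.mp ht).1)
      _ = ((Sstar \ S).card : ℝ) * cbar := by rw [Finset.sum_const, nsmul_eq_mul]
      _ = cbar * ((Sstar.card : ℝ) - M) := by
          rw [Finset.card_sdiff_of_subset hsub, hM, Nat.cast_sub hMN]; ring
  have hAge : clow * (Sstar.card : ℝ) ≤ A := by
    calc clow * (Sstar.card : ℝ) = ∑ _s' ∈ Sstar, clow := by
          rw [Finset.sum_const, nsmul_eq_mul]; ring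
      _ ≤ A := Finset.sum_le_sum (fun t ht => hlb t ht)
  have hBge : clow * (M : ℝ) ≤ B := by
    calc clow * (M : ℝ) = ∑ _s' ∈ S, clow := by
          rw [Finset.sum_const, hM, nsmul_eq_mul]; ring
      _ ≤ B := Finset.sum_le_sum (fun t ht => hlb t (hsub ht))
  have hfs : f s ≤ cbar := hub s (hsub hs)
  have hle : f s / A ≤ f s / B := by
    apply div_le_div_of_nonneg_left (hfpos s).le hBpos hBA
  have habs : |f s / A - f s / B| = f s * (A - B) / (A * B) := by
    rw [abs_of_nonpos (by linarith)]
    field_simp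
    ring
  rw [habs]
  have hrhs : r ^ 2 * ((1 - (M : ℝ) / (Sstar.card : ℝ)) / (M : ℝ)) =
      cbar * (cbar * ((Sstar.card : ℝ) - M)) / (clow * (Sstar.card : ℝ) * (clow * M)) := by
    have hN0 : ((Sstar.card : ℝ)) ≠ 0 := by positivity
    have hM0 : ((M : ℝ)) ≠ 0 := by positivity
    rw [hr]
    field_simp
  rw [hrhs]
  have hNM : (0:ℝ) ≤ (Sstar.card : ℝ) - M := sub_nonneg.mpr (Nat.cast_le.mpr hMN)
  apply div_le_div₀ (mul_nonneg hcbar0.le (mul_nonneg hcbar0.le hNM))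
  · exact mul_le_mul hfs hABle (by linarith) hcbar0.le
  · positivity
  · exact mul_le_mul hAge hBge (by positivity) hApos.le
end

section
/- Let S* be a finite nonempty set, let f : S* → ℝ be a function with f(s) > 0 for all s ∈ S*, and let S ⊆ S* be a nonempty subset with |S| = M. Suppose c̄ and c are real constants with c̄ ≥ f(s) ≥ c > 0 for all s ∈ S*, and set r = c̄/c. Define P*(s) = f(s) / ∑_{s' ∈ S*} f(s') and P(s) = f(s) / ∑_{s' ∈ S} f(s'). Then for every s ∈ S, |P*(s) − P(s)| ≤ r² · (1 − M/|S*|) / M. -/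
/-- Abstract weight-function form of the paper's Proposition (Appendix A):
for a positive weight `f` on a nonempty finite set `Sstar` bounded as
`c ≤ f s ≤ c̄` with `c > 0`, and a nonempty subset `S` of cardinality `M`,
the pointwise difference between the normalizations of `f` over `Sstar` and
over `S` is at most `r² · (1 − M/|Sstar|)/M` with `r = c̄/c`. -/
theorem weight_subset_approx {α : Type*} (Sstar S : Finset α)
    (hSstar : Sstar.Nonempty) (hS : S.Nonempty) (hsub : S ⊆ Sstar)
    (f : α → ℝ) (hf : ∀ s ∈ Sstar, 0 < f s)
    (M : ℕ) (hM : S.card = M)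
    (cbar clow : ℝ) (hclow : 0 < clow)
    (hub : ∀ s ∈ Sstar, f s ≤ cbar)
    (hlb : ∀ s ∈ Sstar, clow ≤ f s)
    (r : ℝ) (hr : r = cbar / clow) :
    ∀ s ∈ S,
      |f s / (∑ s' ∈ Sstar, f s') - f s / (∑ s' ∈ S, f s')| ≤
      r ^ 2 * ((1 - (M : ℝ) / (Sstar.card : ℝ)) / (M : ℝ)) := by
  classical
  intro s hs
  have hsS : s ∈ Sstar := hsub hs
  set N := Sstar.card with hN
  have hNpos : 0 < N := Finset.card_pos.mpr hSstar
  have hMpos : 0 < M := hM ▸ Finset.card_pos.mpr hS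
  have hMN : M ≤ N := hM ▸ Finset.card_le_card hsub
  set B := ∑ s' ∈ S, f s' with hBdef
  set A := ∑ s' ∈ Sstar, f s' with hAdef
  have hBlb : clow * M ≤ B := by
    have : ∑ _s' ∈ S, clow ≤ B := Finset.sum_le_sum fun x hx => hlb x (hsub hx)
    simpa [Finset.sum_const, hM, mul_comm] using this
  have hAlb : clow * N ≤ A := by
    have : ∑ _s' ∈ Sstar, clow ≤ A := Finset.sum_le_sum fun x hx => hlb x hx
    simpa [Finset.sum_const, mul_comm] using this
  have hMR : (0:ℝ) < (M:ℝ) := by exact_mod_cast hMpos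
  have hNR : (0:ℝ) < (N:ℝ) := by exact_mod_cast hNpos
  have hBpos : 0 < B := lt_of_lt_of_le (by positivity) hBlb
  have hApos : 0 < A := lt_of_lt_of_le (by positivity) hAlb
  set C := ∑ s' ∈ Sstar \ S, f s' with hCdef
  have hsplit : A = B + C := by
    rw [hAdef, hBdef, hCdef, ← Finset.sum_sdiff hsub]; ring
  have hClb : 0 ≤ C := Finset.sum_nonneg fun x hx => le_of_lt (hf x (Finset.mem_sdiff.mp hx).1)
  have hCub : C ≤ cbar * ((N:ℝ) - M) := by
    have h1 : C ≤ ∑ _s' ∈ Sstar \ S, cbar :=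
      Finset.sum_le_sum fun x hx => hub x (Finset.mem_sdiff.mp hx).1
    have hcard : (Sstar \ S).card = N - M := by rw [Finset.card_sdiff_of_subset hsub, hM]
    have : ((N - M : ℕ) : ℝ) = (N:ℝ) - M := by
      rw [Nat.cast_sub hMN]
    calc C ≤ ∑ _s' ∈ Sstar \ S, cbar := h1
      _ = cbar * ((N:ℝ) - M) := by
        rw [Finset.sum_const, hcard, nsmul_eq_mul, this, mul_comm]
  have hfsub : f s ≤ cbar := hub s hsS
  have hfpos : 0 < f s := hf s hsS
  have hcbar : 0 < cbar := lt_of_lt_of_le hfpos hfsub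
  have hNM : (0:ℝ) ≤ (N:ℝ) - M := by
    have : (M:ℝ) ≤ N := by exact_mod_cast hMN
    linarith
  have heq : f s / A - f s / B = -(f s * C / (A * B)) := by
    rw [hsplit]
    field_simp
    ring
  have habs : |f s / A - f s / B| = f s * C / (A * B) := by
    rw [heq, abs_neg, abs_of_nonneg (by positivity)]
  rw [habs, hr]
  have hkey : f s * C / (A * B) ≤ cbar * (cbar * ((N:ℝ) - M)) / ((clow * N) * (clow * M)) := by
    apply div_le_div₀ (by positivity)
    · exact mul_le_mul hfsub hCub hClb (le_of_lt hcbar)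
    · positivity
    · exact mul_le_mul hAlb hBlb (by positivity) (le_of_lt hApos)
  refine hkey.trans (le_of_eq ?_)
  field_simp
end
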